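/- arXiv:2505.09964 — 2 statements merged into one kernel-verified Lean document; each statement's English description precedes it below -/
import Mathlib

section
/- Let p be a three times continuously differentiable real function on an interval (a,b) with p'(x) ≠ 0 for all x in (a,b), let q be a real constant, and let f be a solution of f'' + p·f' + q·f = 0 on (a,b). Then the identity w(f)' + (3/2)·(p − p''/p')·w(f) = p'·f'·V holds on (a,b), where V := ( (1/2)·(p'·p − p'')·f + p'·f' )·f' − ( (1/2)·p² − p' − 2q + p'''/p' − (3/2)·(p'')²/(p')² )·v(f). -/
/-- v h = (deriv h)^2 - (second derivative of h) * h. -/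
noncomputable def v (f : ℝ → ℝ) (x : ℝ) : ℝ := (deriv f x) ^ 2 - deriv^[2] f x * f x

/-- Determinant of the 3x3 Hankel-Wronskian matrix of h (rows of 2nd..4th derivatives). -/
noncomputable def w (f : ℝ → ℝ) (x : ℝ) : ℝ :=
  Matrix.det !![deriv^[2] f x, deriv f x, f x;
    deriv^[3] f x, deriv^[2] f x, deriv f x;
    deriv^[4] f x, deriv^[3] f x, deriv^[2] f x]

noncomputable def G2 (p f : ℝ → ℝ) (q : ℝ) : ℝ → ℝ :=
  fun y => -(p y * deriv f y) - q * f y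

noncomputable def G3 (p f : ℝ → ℝ) (q : ℝ) : ℝ → ℝ :=
  fun y => -(deriv p y * deriv f y + p y * G2 p f q y) - q * deriv f y

noncomputable def G4 (p f : ℝ → ℝ) (q : ℝ) : ℝ → ℝ :=
  fun y => -((deriv (deriv p) y * deriv f y + deriv p y * G2 p f q y) +
      (deriv p y * G2 p f q y + p y * G3 p f q y)) - q * G2 p f q y

noncomputable def G5 (p f : ℝ → ℝ) (q : ℝ) : ℝ → ℝ :=
  fun y => -(((deriv (deriv (deriv p)) y * deriv f y + deriv (deriv p) y * G2 p f q y) +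
      (deriv (deriv p) y * G2 p f q y + deriv p y * G3 p f q y)) +
      ((deriv (deriv p) y * G2 p f q y + deriv p y * G3 p f q y) +
      (deriv p y * G3 p f q y + p y * G4 p f q y))) - q * G3 p f q y

noncomputable def W (p f : ℝ → ℝ) (q : ℝ) : ℝ → ℝ :=
  fun y => G2 p f q y * (G2 p f q y * G2 p f q y - G3 p f q y * deriv f y) -
    deriv f y * (G3 p f q y * G2 p f q y - G4 p f q y * deriv f y) +
    f y * (G3 p f q y * G3 p f q y - G4 p f q y * G2 p f q y)

noncomputable def D (p f : ℝ → ℝ) (q : ℝ) : ℝ → ℝ := fun y =>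
  (G3 p f q y * (G2 p f q y * G2 p f q y - G3 p f q y * deriv f y) +
      G2 p f q y * ((G3 p f q y * G2 p f q y + G2 p f q y * G3 p f q y) -
        (G4 p f q y * deriv f y + G3 p f q y * G2 p f q y)) -
    (G2 p f q y * (G3 p f q y * G2 p f q y - G4 p f q y * deriv f y) +
      deriv f y * ((G4 p f q y * G2 p f q y + G3 p f q y * G3 p f q y) -
        (G5 p f q y * deriv f y + G4 p f q y * G2 p f q y)))) +
    (deriv f y * (G3 p f q y * G3 p f q y - G4 p f q y * G2 p f q y) +
      f y * ((G4 p f q y * G3 p f q y + G3 p f q y * G4 p f q y) -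
        (G5 p f q y * G2 p f q y + G4 p f q y * G3 p f q y)))

theorem stmt_15 (a b : ℝ) (hab : a < b) (p f : ℝ → ℝ) (q : ℝ)
    (hp : ContDiffOn ℝ 3 p (Set.Ioo a b))
    (hp' : ∀ x ∈ Set.Ioo a b, deriv p x ≠ 0)
    (hf : ContDiffOn ℝ 5 f (Set.Ioo a b))
    (hode : ∀ x ∈ Set.Ioo a b, deriv^[2] f x + p x * deriv f x + q * f x = 0) :
    ∀ x ∈ Set.Ioo a b,
      deriv (w f) x + (3 / 2) * (p x - deriv^[2] p x / deriv p x) * w f x =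
        deriv p x * deriv f x *
          (((1 / 2) * (deriv p x * p x - deriv^[2] p x) * f x + deriv p x * deriv f x) *
              deriv f x -
            ((1 / 2) * (p x) ^ 2 - deriv p x - 2 * q + deriv^[3] p x / deriv p x -
              (3 / 2) * (deriv^[2] p x) ^ 2 / (deriv p x) ^ 2) * v f x) := by
  have hs : IsOpen (Set.Ioo a b) := isOpen_Ioo
  have hp1 : ContDiffOn ℝ 2 (deriv p) (Set.Ioo a b) := hp.deriv_of_isOpen hs (by norm_num)
  have hp2 : ContDiffOn ℝ 1 (deriv (deriv p)) (Set.Ioo a b) := hp1.deriv_of_isOpen hs (by norm_num)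
  have hf1 : ContDiffOn ℝ 4 (deriv f) (Set.Ioo a b) := hf.deriv_of_isOpen hs (by norm_num)
  have hdp : ∀ y ∈ Set.Ioo a b, HasDerivAt p (deriv p y) y := fun y hy =>
    ((hp.differentiableOn (by norm_num)).differentiableAt (hs.mem_nhds hy)).hasDerivAt
  have hdp1 : ∀ y ∈ Set.Ioo a b, HasDerivAt (deriv p) (deriv (deriv p) y) y := fun y hy =>
    ((hp1.differentiableOn (by norm_num)).differentiableAt (hs.mem_nhds hy)).hasDerivAt
  have hdp2 : ∀ y ∈ Set.Ioo a b,
      HasDerivAt (deriv (deriv p)) (deriv (deriv (deriv p)) y) y := fun y hy =>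
    ((hp2.differentiableOn (by norm_num)).differentiableAt (hs.mem_nhds hy)).hasDerivAt
  have hdf : ∀ y ∈ Set.Ioo a b, HasDerivAt f (deriv f y) y := fun y hy =>
    ((hf.differentiableOn (by norm_num)).differentiableAt (hs.mem_nhds hy)).hasDerivAt
  have h2 : ∀ y ∈ Set.Ioo a b, deriv^[2] f y = G2 p f q y := by
    intro y hy
    have h : deriv^[2] f y + p y * deriv f y + q * f y = 0 := hode y hy
    simp only [G2]; linarith
  have hdf1 : ∀ y ∈ Set.Ioo a b, HasDerivAt (deriv f) (G2 p f q y) y := fun y hy => by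
    have := ((hf1.differentiableOn (by norm_num)).differentiableAt (hs.mem_nhds hy)).hasDerivAt
    rwa [show deriv (deriv f) y = G2 p f q y from h2 y hy] at this
  have hg2 : ∀ y ∈ Set.Ioo a b, HasDerivAt (G2 p f q) (G3 p f q y) y := fun y hy =>
    (((hdp y hy).mul (hdf1 y hy)).neg).sub ((hdf y hy).const_mul q)
  have hg3 : ∀ y ∈ Set.Ioo a b, HasDerivAt (G3 p f q) (G4 p f q y) y := fun y hy =>
    ((((hdp1 y hy).mul (hdf1 y hy)).add ((hdp y hy).mul (hg2 y hy))).neg).sub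
      ((hdf1 y hy).const_mul q)
  have hg4 : ∀ y ∈ Set.Ioo a b, HasDerivAt (G4 p f q) (G5 p f q y) y := fun y hy =>
    (((((hdp2 y hy).mul (hdf1 y hy)).add ((hdp1 y hy).mul (hg2 y hy))).add
      (((hdp1 y hy).mul (hg2 y hy)).add ((hdp y hy).mul (hg3 y hy)))).neg).sub
      ((hg2 y hy).const_mul q)
  have h3 : ∀ y ∈ Set.Ioo a b, deriv^[3] f y = G3 p f q y := by
    intro y hy
    have e1 : deriv^[3] f y = deriv (deriv^[2] f) y := by
      simp [Function.iterate_succ_apply']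
    have e2 : deriv^[2] f =ᶠ[nhds y] G2 p f q :=
      Filter.eventuallyEq_of_mem (hs.mem_nhds hy) h2
    rw [e1, e2.deriv_eq, (hg2 y hy).deriv]
  have h4 : ∀ y ∈ Set.Ioo a b, deriv^[4] f y = G4 p f q y := by
    intro y hy
    have e1 : deriv^[4] f y = deriv (deriv^[3] f) y := by
      simp [Function.iterate_succ_apply']
    have e2 : deriv^[3] f =ᶠ[nhds y] G3 p f q :=
      Filter.eventuallyEq_of_mem (hs.mem_nhds hy) h3
    rw [e1, e2.deriv_eq, (hg3 y hy).deriv]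
  have hWeq : ∀ y ∈ Set.Ioo a b, w f y = W p f q y := by
    intro y hy
    simp [w, W, Matrix.det_fin_three, h2 y hy, h3 y hy, h4 y hy]
    ring
  intro x hx
  have hW : HasDerivAt (W p f q) (D p f q x) x :=
    ((((hg2 x hx).mul (((hg2 x hx).mul (hg2 x hx)).sub ((hg3 x hx).mul (hdf1 x hx)))).sub
      ((hdf1 x hx).mul (((hg3 x hx).mul (hg2 x hx)).sub ((hg4 x hx).mul (hdf1 x hx))))).add
      ((hdf x hx).mul (((hg3 x hx).mul (hg3 x hx)).sub ((hg4 x hx).mul (hg2 x hx)))))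
  have hwd : deriv (w f) x = D p f q x := by
    have e : w f =ᶠ[nhds x] W p f q := Filter.eventuallyEq_of_mem (hs.mem_nhds hx) hWeq
    rw [e.deriv_eq, hW.deriv]
  have ep2 : deriv^[2] p x = deriv (deriv p) x := by simp [Function.iterate_succ_apply']
  have ep3 : deriv^[3] p x = deriv (deriv (deriv p)) x := by simp [Function.iterate_succ_apply']
  rw [hwd, hWeq x hx, v, h2 x hx, ep2, ep3]
  have hP1 : deriv p x ≠ 0 := hp' x hx
  simp only [D, W, G5, G4, G3, G2]
  field_simp
  ring
end

section
/- Let p be a continuously differentiable real function on an interval (a,b), let q be a real constant, let f be a twice continuously differentiable solution of f'' + p·f' + q·f = 0 on (a,b), and let P be an antiderivative of p. Let a₁, a₂, a₃ be continuously differentiable real functions on (a,b) and define F := a₁·(f')² + a₂·f'·f + a₃·v(f). Then e^{−P(x)}·(d/dx)(e^{P(x)}·F(x)) = A₁·(f')² + A₂·f'·f + A₃·v(f), where A₁ = a₁' − a₁·p + 2a₂, A₂ = a₂' − 2a₁·q + p·a₂ + a₃·p', and A₃ = a₃' − a₂. -/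
theorem stmt_16 (a b : ℝ) (hab : a < b) (p f P a₁ a₂ a₃ F : ℝ → ℝ) (q : ℝ)
    (hp : ContDiffOn ℝ 1 p (Set.Ioo a b))
    (hf : ContDiffOn ℝ 2 f (Set.Ioo a b))
    (hode : ∀ x ∈ Set.Ioo a b, deriv^[2] f x + p x * deriv f x + q * f x = 0)
    (hP : ∀ x ∈ Set.Ioo a b, HasDerivAt P (p x) x)
    (ha₁ : ContDiffOn ℝ 1 a₁ (Set.Ioo a b)) (ha₂ : ContDiffOn ℝ 1 a₂ (Set.Ioo a b))
    (ha₃ : ContDiffOn ℝ 1 a₃ (Set.Ioo a b))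
    (hF : F = fun x => a₁ x * (deriv f x) ^ 2 + a₂ x * deriv f x * f x + a₃ x * v f x) :
    ∀ x ∈ Set.Ioo a b,
      Real.exp (-(P x)) * deriv (fun y => Real.exp (P y) * F y) x =
        (deriv a₁ x - a₁ x * p x + 2 * a₂ x) * (deriv f x) ^ 2 +
        (deriv a₂ x - 2 * a₁ x * q + p x * a₂ x + a₃ x * deriv p x) * (deriv f x * f x) +
        (deriv a₃ x - a₂ x) * v f x := by
  intro x hx
  have hmem : Set.Ioo a b ∈ nhds x := isOpen_Ioo.mem_nhds hx
  have h2 : deriv^[2] f = deriv (deriv f) := by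
    funext y; rw [Function.iterate_succ_apply', Function.iterate_one]
  -- differentiability facts at x
  have hdf : HasDerivAt f (deriv f x) x :=
    (((hf x hx).contDiffAt hmem).differentiableAt (by norm_num)).hasDerivAt
  have hdf2 : HasDerivAt (deriv f) (deriv^[2] f x) x := by
    rw [h2]
    have := (hf.deriv_of_isOpen isOpen_Ioo (show (1:WithTop ℕ∞)+1 ≤ 2 by norm_num)) x hx
    exact ((this.contDiffAt hmem).differentiableAt one_ne_zero).hasDerivAt
  have hda1 : HasDerivAt a₁ (deriv a₁ x) x :=
    (((ha₁ x hx).contDiffAt hmem).differentiableAt one_ne_zero).hasDerivAt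
  have hda2 : HasDerivAt a₂ (deriv a₂ x) x :=
    (((ha₂ x hx).contDiffAt hmem).differentiableAt one_ne_zero).hasDerivAt
  have hda3 : HasDerivAt a₃ (deriv a₃ x) x :=
    (((ha₃ x hx).contDiffAt hmem).differentiableAt one_ne_zero).hasDerivAt
  have hdp : HasDerivAt p (deriv p x) x :=
    (((hp x hx).contDiffAt hmem).differentiableAt one_ne_zero).hasDerivAt
  have hPe : HasDerivAt (fun y => Real.exp (P y)) (Real.exp (P x) * p x) x :=
    (hP x hx).exp
  -- the modified function G, equal to exp(P)·F near x
  set G : ℝ → ℝ := fun y => Real.exp (P y) *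
    (a₁ y * (deriv f y) ^ 2 + a₂ y * deriv f y * f y +
      a₃ y * ((deriv f y) ^ 2 + p y * deriv f y * f y + q * f y ^ 2)) with hG
  have heq : (fun y => Real.exp (P y) * F y) =ᶠ[nhds x] G := by
    filter_upwards [hmem] with y hy
    have hv : v f y = (deriv f y) ^ 2 + p y * deriv f y * f y + q * f y ^ 2 := by
      have h := hode y hy
      have h2y : deriv^[2] f y = -(p y * deriv f y + q * f y) := by linarith
      simp only [v, h2y]; ring
    rw [hF]; simp only [hG, hv]
  have hinner : HasDerivAt (fun y => a₁ y * (deriv f y) ^ 2 + a₂ y * deriv f y * f y +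
      a₃ y * ((deriv f y) ^ 2 + p y * deriv f y * f y + q * f y ^ 2))
      ((deriv a₁ x * (deriv f x) ^ 2 + a₁ x * (2 * deriv f x ^ 1 * deriv^[2] f x)) +
       ((deriv a₂ x * deriv f x + a₂ x * deriv^[2] f x) * f x + a₂ x * deriv f x * deriv f x) +
       (deriv a₃ x * ((deriv f x) ^ 2 + p x * deriv f x * f x + q * f x ^ 2) +
        a₃ x * ((2 * deriv f x ^ 1 * deriv^[2] f x) +
          ((deriv p x * deriv f x + p x * deriv^[2] f x) * f x + p x * deriv f x * deriv f x) +
          (0 * f x ^ 2 + q * (2 * f x ^ 1 * deriv f x))))) x := by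
    exact ((hda1.mul (hdf2.pow 2)).add ((hda2.mul hdf2).mul hdf)).add
      (hda3.mul (((hdf2.pow 2).add ((hdp.mul hdf2).mul hdf)).add
        ((hasDerivAt_const x q).mul (hdf.pow 2))))
  have hGd : HasDerivAt G _ x := hPe.mul hinner
  rw [heq.deriv_eq, hGd.deriv]
  have hd2 : deriv^[2] f x = -(p x * deriv f x + q * f x) := by
    have := hode x hx; linarith
  simp only [v, hd2, Real.exp_neg, pow_one]
  field_simp
  ring
end
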